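/- arXiv:1610.04369 — 3 statements merged into one kernel-verified Lean document; each statement's English description precedes it below -/
import Mathlib

section
/- For every natural number m, there exist complex numbers λ_0, …, λ_{2m} such that for all real x, (1+x^2)^m · e^{iπx^2} = Σ_{j=0}^{2m} λ_j · (d^j/dx^j)(e^{iπx^2}). -/
open Complex Finset Polynomial

noncomputable def cc : ℂ := 2 * Real.pi * Complex.I

noncomputable def gg (x : ℝ) : ℂ := Complex.exp (Complex.I * Real.pi * x ^ 2)

lemma cc_ne : cc ≠ 0 := by
  simp [cc, Real.pi_ne_zero, Complex.I_ne_zero, Complex.ofReal_ne_zero]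

lemma hasDerivAt_gg (x : ℝ) : HasDerivAt gg (cc * x * gg x) x := by
  have h1 : HasDerivAt (fun z : ℂ => Complex.I * Real.pi * z ^ 2)
      (Complex.I * Real.pi * (2 * x)) x := by
    simpa [mul_comm] using (hasDerivAt_pow 2 (x:ℂ)).const_mul (Complex.I * (Real.pi : ℂ))
  have h3 := h1.cexp.comp_ofReal
  convert h3 using 1
  · rfl
  · simp [gg, cc]; ring

noncomputable def PP : ℕ → Polynomial ℂ
  | 0 => 1
  | (j+1) => Polynomial.derivative (PP j) + Polynomial.C cc * Polynomial.X * PP j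

lemma iteratedDeriv_gg (j : ℕ) (x : ℝ) :
    iteratedDeriv j gg x = (PP j).eval (x:ℂ) * gg x := by
  induction j generalizing x with
  | zero => simp [PP]
  | succ n ih =>
    rw [iteratedDeriv_succ]
    have hfun : iteratedDeriv n gg = fun x : ℝ => (PP n).eval (x:ℂ) * gg x := funext ih
    rw [hfun]
    have h1 : HasDerivAt (fun x : ℝ => (PP n).eval (x:ℂ))
        ((Polynomial.derivative (PP n)).eval (x:ℂ)) x :=
      ((PP n).hasDerivAt (x:ℂ)).comp_ofReal
    have h2 : HasDerivAt (fun x : ℝ => (PP n).eval (x:ℂ) * gg x) _ x := h1.mul (hasDerivAt_gg x)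
    rw [h2.deriv]
    simp [PP]; ring

lemma natDegree_PP (j : ℕ) : (PP j).natDegree ≤ j := by
  induction j with
  | zero => simp [PP]
  | succ n ih =>
    apply le_trans (Polynomial.natDegree_add_le _ _)
    refine max_le (le_trans (Polynomial.natDegree_derivative_le _) ?_) ?_
    · omega
    · apply le_trans (Polynomial.natDegree_mul_le)
      have : (Polynomial.C cc * Polynomial.X : Polynomial ℂ).natDegree ≤ 1 :=
        le_trans Polynomial.natDegree_mul_le (by simp)
      omega

lemma coeff_PP (j : ℕ) : (PP j).coeff j = cc ^ j := by
  induction j with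
  | zero => simp [PP]
  | succ n ih =>
    have h1 : (Polynomial.derivative (PP n)).coeff (n+1) = 0 := by
      apply Polynomial.coeff_eq_zero_of_natDegree_lt
      have := Polynomial.natDegree_derivative_le (PP n)
      have := natDegree_PP n
      omega
    have h2 : (Polynomial.C cc * Polynomial.X * PP n).coeff (n+1) = cc * (PP n).coeff n := by
      rw [mul_assoc, Polynomial.coeff_C_mul, Polynomial.coeff_X_mul]
    simp [PP, h1, h2, ih, pow_succ]; ring

lemma span_PP (n : ℕ) : ∀ q : Polynomial ℂ, q.natDegree ≤ n →
    ∃ lam : ℕ → ℂ, q = ∑ j ∈ Finset.range (n+1), Polynomial.C (lam j) * PP j := by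
  induction n with
  | zero =>
    intro q hq
    refine ⟨fun _ => q.coeff 0, ?_⟩
    simp [PP]
    exact Polynomial.eq_C_of_natDegree_le_zero hq
  | succ n ih =>
    intro q hq
    set a := q.coeff (n+1) / cc ^ (n+1) with ha
    set r := q - Polynomial.C a * PP (n+1) with hr
    have hrd : r.natDegree ≤ n := by
      rw [Polynomial.natDegree_le_iff_coeff_eq_zero]
      intro N hN
      rcases eq_or_lt_of_le (Nat.succ_le_of_lt hN) with h | h
      · rw [hr]
        simp only [Polynomial.coeff_sub, Polynomial.coeff_C_mul, ← h, coeff_PP]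
        rw [ha, div_mul_cancel₀]
        · ring
        · exact pow_ne_zero _ cc_ne
      · rw [hr]
        simp only [Polynomial.coeff_sub, Polynomial.coeff_C_mul]
        rw [Polynomial.coeff_eq_zero_of_natDegree_lt (lt_of_le_of_lt hq h),
          Polynomial.coeff_eq_zero_of_natDegree_lt (lt_of_le_of_lt (natDegree_PP (n+1)) h)]
        ring
    obtain ⟨lam, hlam⟩ := ih r hrd
    refine ⟨Function.update lam (n+1) a, ?_⟩
    rw [Finset.sum_range_succ, Function.update_self]
    have : ∑ j ∈ Finset.range (n+1), Polynomial.C (Function.update lam (n+1) a j) * PP j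
        = ∑ j ∈ Finset.range (n+1), Polynomial.C (lam j) * PP j := by
      apply Finset.sum_congr rfl
      intro j hj
      rw [Function.update_of_ne (by simp at hj; omega)]
    rw [this, ← hlam, hr]
    ring

/-- For every natural number `m`, there exist complex numbers `λ_0, …, λ_{2m}` such that
for all real `x`, `(1+x^2)^m · e^{iπx²} = Σ_{j=0}^{2m} λ_j · (d^j/dx^j)(e^{iπx²})`. -/
theorem oscillating_gaussian_derivative_identity (m : ℕ) :
    ∃ lam : ℕ → ℂ, ∀ x : ℝ,
      ((1 + (x : ℂ) ^ 2) ^ m) * Complex.exp (Complex.I * Real.pi * x ^ 2) =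
        ∑ j ∈ Finset.range (2 * m + 1),
          lam j * iteratedDeriv j (fun t : ℝ => Complex.exp (Complex.I * Real.pi * t ^ 2)) x := by
  set q : Polynomial ℂ := (1 + Polynomial.X ^ 2) ^ m with hqdef
  have hq : q.natDegree ≤ 2 * m := by
    apply le_trans Polynomial.natDegree_pow_le
    have : (1 + Polynomial.X ^ 2 : Polynomial ℂ).natDegree ≤ 2 :=
      le_trans (Polynomial.natDegree_add_le _ _) (by simp)
    nlinarith [this]
  obtain ⟨lam, hlam⟩ := span_PP (2 * m) q hq
  refine ⟨lam, fun x => ?_⟩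
  have hx : (fun t : ℝ => Complex.exp (Complex.I * Real.pi * t ^ 2)) = gg := rfl
  rw [hx]
  have : ∑ j ∈ Finset.range (2 * m + 1), lam j * iteratedDeriv j gg x
      = q.eval (x:ℂ) * gg x := by
    calc ∑ j ∈ Finset.range (2 * m + 1), lam j * iteratedDeriv j gg x
        = ∑ j ∈ Finset.range (2 * m + 1), (Polynomial.C (lam j) * PP j).eval (x:ℂ) * gg x := by
          apply Finset.sum_congr rfl
          intro j _
          rw [iteratedDeriv_gg]
          simp [mul_assoc]
      _ = (∑ j ∈ Finset.range (2 * m + 1), Polynomial.C (lam j) * PP j).eval (x:ℂ) * gg x := by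
          rw [← Finset.sum_mul, Polynomial.eval_finset_sum]
      _ = q.eval (x:ℂ) * gg x := by rw [← hlam]
  rw [this, hqdef]
  simp [gg]
end

section
/- Let α > 1, δ ∈ (0, 1/2), and x, y ∈ ℝ^d with x ≠ 0 and |x−y| ≤ (1−δ)|x|. Define w_α(x,y) = α ∫_0^1 |t·x+(1−t)·y|^{α−2} (t·x+(1−t)·y) dt. Then (1/2)·δ^{α−1} ≤ α^{−1} |x|^{1−α} |w_α(x,y)| ≤ (2−δ)^{α−1}. -/
open MeasureTheory intervalIntegral Set

lemma osc_key (α δ m X s P : ℝ) (hα : 1 ≤ α) (hδ0 : 0 < δ) (hδ1 : δ ≤ 1)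
    (hm1 : δ ≤ m) (hm2 : m ≤ 1) (hX : 0 < X)
    (hs1 : m * X ≤ s) (hs2 : s ≤ (2 - m) * X)
    (hP : (s ^ 2 + m * (2 - m) * X ^ 2) / 2 ≤ P) :
    δ ^ (α - 1) * X ^ α * m ≤ s ^ (α - 2) * P := by
  have hm0 : 0 < m := lt_of_lt_of_le hδ0 hm1
  have hs0 : 0 < s := lt_of_lt_of_le (by positivity) hs1
  have h2m : (1:ℝ) ≤ 2 - m := by linarith
  have hα1 : (0:ℝ) ≤ α - 1 := by linarith
  have hsp : (0:ℝ) ≤ s ^ (α - 2) := Real.rpow_nonneg hs0.le _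
  -- Claim A : δ^(α-1) * X^α * m ≤ s^α
  have hA : δ ^ (α - 1) * X ^ α * m ≤ s ^ α := by
    have h3 : δ ^ (α - 1) ≤ m ^ (α - 1) := Real.rpow_le_rpow hδ0.le hm1 hα1
    calc δ ^ (α - 1) * X ^ α * m ≤ m ^ (α - 1) * X ^ α * m := by
          apply mul_le_mul_of_nonneg_right _ hm0.le
          exact mul_le_mul_of_nonneg_right h3 (Real.rpow_nonneg hX.le _)
      _ = m ^ (α - 1) * m ^ (1:ℝ) * X ^ α := by rw [Real.rpow_one]; ring
      _ = m ^ α * X ^ α := by rw [← Real.rpow_add hm0]; ring_nf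
      _ = (m * X) ^ α := (Real.mul_rpow hm0.le hX.le).symm
      _ ≤ s ^ α := Real.rpow_le_rpow (by positivity) hs1 (by linarith)
  -- Claim B : δ^(α-1) * X^α * m ≤ m * (2 - m) * X^2 * s^(α-2)
  have hB : δ ^ (α - 1) * X ^ α * m ≤ m * (2 - m) * X ^ 2 * s ^ (α - 2) := by
    have key : δ ^ (α - 1) * X ^ (α - 2) ≤ (2 - m) * s ^ (α - 2) := by
      have hX2 : (0:ℝ) ≤ X ^ (α - 2) := Real.rpow_nonneg hX.le _
      rcases le_total 2 α with h2α | h2α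
      · have hsd : δ * X ≤ s := le_trans (by nlinarith) hs1
        have h3 : δ ^ (α - 1) ≤ δ ^ (α - 2) :=
          Real.rpow_le_rpow_of_exponent_ge hδ0 hδ1 (by linarith)
        calc δ ^ (α - 1) * X ^ (α - 2) ≤ δ ^ (α - 2) * X ^ (α - 2) :=
              mul_le_mul_of_nonneg_right h3 hX2
          _ = (δ * X) ^ (α - 2) := (Real.mul_rpow hδ0.le hX.le).symm
          _ ≤ s ^ (α - 2) := Real.rpow_le_rpow (by positivity) hsd (by linarith)
          _ ≤ (2 - m) * s ^ (α - 2) := le_mul_of_one_le_left hsp h2m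
      · have h1 : ((2 - m) * X) ^ (α - 2) ≤ s ^ (α - 2) :=
          Real.rpow_le_rpow_of_nonpos hs0 hs2 (by linarith)
        have h2 : ((2 - m) * X) ^ (α - 2) = (2 - m) ^ (α - 2) * X ^ (α - 2) :=
          Real.mul_rpow (by linarith) hX.le
        have h3 : (2 - m) * (2 - m) ^ (α - 2) = (2 - m) ^ (α - 1) := by
          rw [mul_comm, ← Real.rpow_add_one (by positivity : (2 - m) ≠ 0)]
          ring_nf
        have h4 : (1:ℝ) ≤ (2 - m) ^ (α - 1) := by
          calc (1:ℝ) = (2 - m) ^ (0:ℝ) := (Real.rpow_zero _).symm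
            _ ≤ (2 - m) ^ (α - 1) := Real.rpow_le_rpow_of_exponent_le h2m hα1
        have h5 : δ ^ (α - 1) ≤ 1 := Real.rpow_le_one hδ0.le hδ1 hα1
        calc δ ^ (α - 1) * X ^ (α - 2) ≤ 1 * X ^ (α - 2) :=
              mul_le_mul_of_nonneg_right h5 hX2
          _ = X ^ (α - 2) := one_mul _
          _ ≤ (2 - m) ^ (α - 1) * X ^ (α - 2) := le_mul_of_one_le_left hX2 h4
          _ = (2 - m) * ((2 - m) ^ (α - 2) * X ^ (α - 2)) := by rw [← h3]; ring
          _ ≤ (2 - m) * s ^ (α - 2) := by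
              rw [← h2]; exact mul_le_mul_of_nonneg_left h1 (by linarith)
    have hXX : X ^ (α - 2) * X ^ 2 = X ^ α := by
      rw [← Real.rpow_two, ← Real.rpow_add hX]; ring_nf
    calc δ ^ (α - 1) * X ^ α * m = (δ ^ (α - 1) * X ^ (α - 2)) * X ^ 2 * m := by
          rw [mul_assoc (δ ^ (α - 1)) (X ^ (α - 2)), hXX]
      _ ≤ ((2 - m) * s ^ (α - 2)) * X ^ 2 * m := by
          apply mul_le_mul_of_nonneg_right _ hm0.le
          exact mul_le_mul_of_nonneg_right key (by positivity)
      _ = m * (2 - m) * X ^ 2 * s ^ (α - 2) := by ring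
  have hss : s ^ (α - 2) * s ^ 2 = s ^ α := by
    rw [← Real.rpow_two, ← Real.rpow_add hs0]; ring_nf
  calc δ ^ (α - 1) * X ^ α * m
      = (δ ^ (α - 1) * X ^ α * m + δ ^ (α - 1) * X ^ α * m) / 2 := by ring
    _ ≤ (s ^ α + m * (2 - m) * X ^ 2 * s ^ (α - 2)) / 2 := by linarith
    _ = s ^ (α - 2) * ((s ^ 2 + m * (2 - m) * X ^ 2) / 2) := by rw [← hss]; ring
    _ ≤ s ^ (α - 2) * P := mul_le_mul_of_nonneg_left hP hsp

set_option maxHeartbeats 1000000 in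
/-- For `α > 1`, `δ ∈ (0,1/2)`, `x ≠ 0` and `|x−y| ≤ (1−δ)|x|`, with
`w_α(x,y) = α ∫_0^1 |t·x+(1−t)·y|^{α−2} (t·x+(1−t)·y) dt`, one has
`(1/2)·δ^{α−1} ≤ α⁻¹ |x|^{1−α} |w_α(x,y)| ≤ (2−δ)^{α−1}`. -/
theorem oscillation_phase_gradient_bounds
    (d : ℕ) (α δ : ℝ) (hα : 1 < α) (hδ0 : 0 < δ) (hδ : δ < 1 / 2)
    (x y : EuclideanSpace ℝ (Fin d)) (hx : x ≠ 0) (hxy : ‖x - y‖ ≤ (1 - δ) * ‖x‖)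
    (w : EuclideanSpace ℝ (Fin d))
    (hw : w = α • ∫ t in (0 : ℝ)..1,
        (‖t • x + (1 - t) • y‖ ^ (α - 2)) • (t • x + (1 - t) • y)) :
    (1 / 2) * δ ^ (α - 1) ≤ α⁻¹ * ‖x‖ ^ (1 - α) * ‖w‖ ∧
      α⁻¹ * ‖x‖ ^ (1 - α) * ‖w‖ ≤ (2 - δ) ^ (α - 1) := by
  have hX : (0:ℝ) < ‖x‖ := norm_pos_iff.mpr hx
  have hδ1 : δ < 1 := by linarith
  have hα0 : (0:ℝ) < α := by linarith
  set γ : ℝ → EuclideanSpace ℝ (Fin d) := fun t => t • x + (1 - t) • y with hγdef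
  set g : ℝ → EuclideanSpace ℝ (Fin d) := fun t => (‖γ t‖ ^ (α - 2)) • γ t with hgdef
  have hw' : w = α • ∫ t in (0:ℝ)..1, g t := hw
  -- basic geometric bounds
  have hγsub : ∀ t : ℝ, γ t - x = (1 - t) • (y - x) := by
    intro t
    simp only [hγdef, smul_sub, sub_smul, one_smul]
    abel
  have hγdist : ∀ t ∈ Icc (0:ℝ) 1, ‖γ t - x‖ ≤ (1 - (δ + t * (1 - δ))) * ‖x‖ := by
    intro t ht
    rw [hγsub t, norm_smul, Real.norm_eq_abs, abs_of_nonneg (by linarith [ht.2] : (0:ℝ) ≤ 1 - t),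
      norm_sub_rev]
    calc (1 - t) * ‖x - y‖ ≤ (1 - t) * ((1 - δ) * ‖x‖) :=
          mul_le_mul_of_nonneg_left hxy (by linarith [ht.2])
      _ = (1 - (δ + t * (1 - δ))) * ‖x‖ := by ring
  have hmδ : ∀ t ∈ Icc (0:ℝ) 1, δ ≤ δ + t * (1 - δ) ∧ δ + t * (1 - δ) ≤ 1 := by
    intro t ht
    constructor <;> nlinarith [ht.1, ht.2]
  have hlow : ∀ t ∈ Icc (0:ℝ) 1, (δ + t * (1 - δ)) * ‖x‖ ≤ ‖γ t‖ := by
    intro t ht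
    have h1 := hγdist t ht
    have h2 : ‖x‖ - ‖γ t‖ ≤ ‖x - γ t‖ := norm_sub_norm_le x (γ t)
    rw [norm_sub_rev] at h2
    linarith
  have hup : ∀ t ∈ Icc (0:ℝ) 1, ‖γ t‖ ≤ (2 - (δ + t * (1 - δ))) * ‖x‖ := by
    intro t ht
    have h1 := hγdist t ht
    have h2 : ‖γ t‖ ≤ ‖x‖ + ‖γ t - x‖ := by
      have h3 : x + (γ t - x) = γ t := by abel
      calc ‖γ t‖ = ‖x + (γ t - x)‖ := by rw [h3]
        _ ≤ ‖x‖ + ‖γ t - x‖ := norm_add_le _ _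
    linarith
  have hγpos : ∀ t ∈ Icc (0:ℝ) 1, 0 < ‖γ t‖ := by
    intro t ht
    have := hlow t ht
    have := (hmδ t ht).1
    nlinarith
  -- continuity / integrability
  have hcontγ : Continuous γ := by
    simp only [hγdef]; fun_prop
  have huIcc : uIcc (0:ℝ) 1 = Icc 0 1 := uIcc_of_le (by norm_num)
  have hcontg : ContinuousOn g (uIcc (0:ℝ) 1) := by
    show ContinuousOn ((fun t => ‖γ t‖ ^ (α - 2)) • γ) _
    apply ContinuousOn.smul _ hcontγ.continuousOn
    apply ContinuousOn.rpow_const hcontγ.norm.continuousOn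
    intro t ht
    rw [huIcc] at ht
    exact Or.inl (hγpos t ht).ne'
  have hint : IntervalIntegrable g volume 0 1 := hcontg.intervalIntegrable
  -- norm of g
  have hng : ∀ t ∈ Icc (0:ℝ) 1, ‖g t‖ = ‖γ t‖ ^ (α - 1) := by
    intro t ht
    rw [hgdef]
    simp only
    rw [norm_smul, Real.norm_eq_abs, abs_of_nonneg (Real.rpow_nonneg (norm_nonneg _) _),
      ← Real.rpow_add_one (hγpos t ht).ne']
    ring_nf
  ----------------------------------------------------------------
  -- Upper bound
  ----------------------------------------------------------------
  have hIle : ‖∫ t in (0:ℝ)..1, g t‖ ≤ ((2 - δ) * ‖x‖) ^ (α - 1) := by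
    have h := intervalIntegral.norm_integral_le_of_norm_le_const
      (C := ((2 - δ) * ‖x‖) ^ (α - 1)) (f := g) (a := 0) (b := 1) ?_
    · simpa using h
    · intro t ht
      rw [uIoc_of_le (by norm_num)] at ht
      have ht' : t ∈ Icc (0:ℝ) 1 := ⟨ht.1.le, ht.2⟩
      rw [hng t ht']
      apply Real.rpow_le_rpow (norm_nonneg _) _ (by linarith)
      calc ‖γ t‖ ≤ (2 - (δ + t * (1 - δ))) * ‖x‖ := hup t ht'
        _ ≤ (2 - δ) * ‖x‖ := by nlinarith [ht.1, ht.2, (hmδ t ht').1]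
  have hone : ‖x‖ ^ (1 - α) * ‖x‖ ^ (α - 1) = 1 := by
    rw [← Real.rpow_add hX]
    norm_num
  have hub : α⁻¹ * ‖x‖ ^ (1 - α) * ‖w‖ ≤ (2 - δ) ^ (α - 1) := by
    have hnw : ‖w‖ = α * ‖∫ t in (0:ℝ)..1, g t‖ := by
      rw [hw', norm_smul, Real.norm_eq_abs, abs_of_pos hα0]
    rw [hnw]
    have hsplit : ((2 - δ) * ‖x‖) ^ (α - 1) = (2 - δ) ^ (α - 1) * ‖x‖ ^ (α - 1) :=
      Real.mul_rpow (by linarith) hX.le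
    calc α⁻¹ * ‖x‖ ^ (1 - α) * (α * ‖∫ t in (0:ℝ)..1, g t‖)
        = ‖x‖ ^ (1 - α) * ‖∫ t in (0:ℝ)..1, g t‖ := by
          field_simp
      _ ≤ ‖x‖ ^ (1 - α) * ((2 - δ) * ‖x‖) ^ (α - 1) := by
          apply mul_le_mul_of_nonneg_left hIle (Real.rpow_nonneg hX.le _)
      _ = (2 - δ) ^ (α - 1) * (‖x‖ ^ (1 - α) * ‖x‖ ^ (α - 1)) := by rw [hsplit]; ring
      _ = (2 - δ) ^ (α - 1) := by rw [hone, mul_one]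
  ----------------------------------------------------------------
  -- Lower bound
  ----------------------------------------------------------------
  have hpt : ∀ t ∈ Icc (0:ℝ) 1,
      δ ^ (α - 1) * ‖x‖ ^ α * t ≤ inner ℝ x (g t) := by
    intro t ht
    have hm := hmδ t ht
    have hP : (‖γ t‖ ^ 2 + (δ + t * (1 - δ)) * (2 - (δ + t * (1 - δ))) * ‖x‖ ^ 2) / 2
        ≤ (inner ℝ x (γ t) : ℝ) := by
      have hpol := norm_sub_sq_real x (γ t)
      have hd : ‖x - γ t‖ ≤ (1 - (δ + t * (1 - δ))) * ‖x‖ := by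
        rw [norm_sub_rev]; exact hγdist t ht
      have hd0 : (0:ℝ) ≤ ‖x - γ t‖ := norm_nonneg _
      have hd2 : ‖x - γ t‖ ^ 2 ≤ ((1 - (δ + t * (1 - δ))) * ‖x‖) ^ 2 :=
        pow_le_pow_left₀ hd0 hd 2
      nlinarith [hd2, hpol]
    have hkey := osc_key α δ (δ + t * (1 - δ)) ‖x‖ ‖γ t‖ (inner ℝ x (γ t))
      hα.le hδ0 hδ1.le hm.1 hm.2 hX (hlow t ht) (hup t ht) hP
    have hig : (inner ℝ x (g t) : ℝ) = ‖γ t‖ ^ (α - 2) * inner ℝ x (γ t) := by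
      rw [hgdef]
      simp only
      exact real_inner_smul_right x (γ t) _
    rw [hig]
    refine le_trans ?_ hkey
    have h1 : t ≤ δ + t * (1 - δ) := by nlinarith [ht.2]
    have h2 : (0:ℝ) ≤ δ ^ (α - 1) * ‖x‖ ^ α := by positivity
    nlinarith
  have hcontig : ContinuousOn (fun t => (inner ℝ x (g t) : ℝ)) (uIcc (0:ℝ) 1) :=
    ContinuousOn.inner continuousOn_const hcontg
  have hint2 : IntervalIntegrable (fun t => (inner ℝ x (g t) : ℝ)) volume 0 1 :=
    hcontig.intervalIntegrable
  have hint3 : IntervalIntegrable (fun t => δ ^ (α - 1) * ‖x‖ ^ α * t) volume 0 1 := by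
    apply Continuous.intervalIntegrable
    fun_prop
  have hImono : δ ^ (α - 1) * ‖x‖ ^ α * (1 / 2)
      ≤ ∫ t in (0:ℝ)..1, (inner ℝ x (g t) : ℝ) := by
    have h1 : (∫ t in (0:ℝ)..1, δ ^ (α - 1) * ‖x‖ ^ α * t)
        ≤ ∫ t in (0:ℝ)..1, (inner ℝ x (g t) : ℝ) :=
      intervalIntegral.integral_mono_on (by norm_num) hint3 hint2 hpt
    have h2 : (∫ t in (0:ℝ)..1, δ ^ (α - 1) * ‖x‖ ^ α * t)
        = δ ^ (α - 1) * ‖x‖ ^ α * (1 / 2) := by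
      rw [intervalIntegral.integral_const_mul, integral_id]
      norm_num
    linarith
  have hinner_w : (inner ℝ x w : ℝ) = α * ∫ t in (0:ℝ)..1, (inner ℝ x (g t) : ℝ) := by
    rw [hw', real_inner_smul_right]
    congr 1
    have := (innerSL ℝ x).intervalIntegral_comp_comm hint
    simpa using this.symm
  have hwx : α * (δ ^ (α - 1) * ‖x‖ ^ α * (1 / 2)) ≤ ‖x‖ * ‖w‖ := by
    calc α * (δ ^ (α - 1) * ‖x‖ ^ α * (1 / 2))
        ≤ α * ∫ t in (0:ℝ)..1, (inner ℝ x (g t) : ℝ) :=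
          mul_le_mul_of_nonneg_left hImono hα0.le
      _ = (inner ℝ x w : ℝ) := hinner_w.symm
      _ ≤ ‖x‖ * ‖w‖ := real_inner_le_norm x w
  have hlb : (1 / 2) * δ ^ (α - 1) ≤ α⁻¹ * ‖x‖ ^ (1 - α) * ‖w‖ := by
    have hxa : ‖x‖ ^ α = ‖x‖ ^ (α - 1) * ‖x‖ := by
      rw [← Real.rpow_add_one hX.ne']
      ring_nf
    have hwge : α * δ ^ (α - 1) * ‖x‖ ^ (α - 1) * (1 / 2) ≤ ‖w‖ := by
      rw [hxa] at hwx
      have := (mul_le_mul_iff_of_pos_left hX).mp (by linarith [hwx] : ‖x‖ * (α * δ ^ (α - 1) * ‖x‖ ^ (α - 1) * (1 / 2)) ≤ ‖x‖ * ‖w‖)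
      linarith
    calc (1 / 2) * δ ^ (α - 1)
        = α⁻¹ * ‖x‖ ^ (1 - α) * (α * δ ^ (α - 1) * ‖x‖ ^ (α - 1) * (1 / 2)) := by
          rw [show α⁻¹ * ‖x‖ ^ (1 - α) * (α * δ ^ (α - 1) * ‖x‖ ^ (α - 1) * (1 / 2))
              = (α⁻¹ * α) * (‖x‖ ^ (1 - α) * ‖x‖ ^ (α - 1)) * (δ ^ (α - 1) * (1 / 2))
              from by ring, inv_mul_cancel₀ hα0.ne', hone]
          ring
      _ ≤ α⁻¹ * ‖x‖ ^ (1 - α) * ‖w‖ := by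
          apply mul_le_mul_of_nonneg_left hwge
          positivity
  exact ⟨hlb, hub⟩
end

section
/- Let α ≥ 1 and γ := 1 − β + |α−1| − ε ≥ 0 with ε, β > 0. With a_n, b_n as in the oscillation lemma (a_n = (1/k)(π/4 + 2nπ), b_n = a_n + π/(2k), k > 0), the series Σ_{n≥N} ∫_{a_n^{1/α}}^{b_n^{1/α}} r^{−β+|α−1|−ε} dr diverges for any N ∈ ℕ; in fact the n-th term is bounded below by c · n^{γ/α − 1} for some c > 0 and all large n. -/
open intervalIntegral in
lemma rpow_sub_rpow_lb {a b t : ℝ} (ha : 0 < a) (hab : a ≤ b) (ht0 : 0 < t) (ht1 : t ≤ 1) :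
    t * b ^ (t - 1) * (b - a) ≤ b ^ t - a ^ t := by
  have hb : 0 < b := lt_of_lt_of_le ha hab
  have hint : ∫ x in a..b, x ^ (t - 1) = (b ^ t - a ^ t) / t := by
    rw [integral_rpow (Or.inl (by linarith : (-1:ℝ) < t - 1))]
    have h : t - 1 + 1 = t := by ring
    rw [h]
  have hmono : (b - a) * b ^ (t - 1) ≤ ∫ x in a..b, x ^ (t - 1) := by
    have h := intervalIntegral.integral_mono_on (μ := MeasureTheory.volume) hab
      (_root_.intervalIntegrable_const (c := b ^ (t - 1)))
      (intervalIntegral.intervalIntegrable_rpow' (by linarith))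
      (fun x hx => Real.rpow_le_rpow_of_nonpos (lt_of_lt_of_le ha hx.1) hx.2 (by linarith))
    simpa [intervalIntegral.integral_const, smul_eq_mul] using h
  rw [hint, le_div_iff₀ ht0] at hmono
  nlinarith [hmono]

/-- With `γ = 1 − β + |α−1| − ε ≥ 0`, `a_n = (1/k)(π/4 + 2nπ)`, `b_n = a_n + π/(2k)`,
the series `Σ_{n≥N} ∫_{a_n^{1/α}}^{b_n^{1/α}} r^{−β+|α−1|−ε} dr` diverges for any `N`,
and its `n`-th term is bounded below by `c·n^{γ/α−1}` for some `c > 0` and all large `n`. -/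
theorem oscillation_series_diverges
    (α β ε k : ℝ) (hα : 1 ≤ α) (hβ : 0 < β) (hε : 0 < ε) (hk : 0 < k)
    (γ : ℝ) (hγdef : γ = 1 - β + |α - 1| - ε) (hγ : 0 ≤ γ)
    (a b : ℕ → ℝ)
    (ha : ∀ n, a n = (1 / k) * (Real.pi / 4 + 2 * n * Real.pi))
    (hb : ∀ n, b n = a n + Real.pi / (2 * k))
    (u : ℕ → ℝ)
    (hu : ∀ n, u n = ∫ r in (a n) ^ (1 / α)..(b n) ^ (1 / α), r ^ (-β + |α - 1| - ε)) :
    (∃ c > (0 : ℝ), ∃ M : ℕ, ∀ n ≥ M, c * (n : ℝ) ^ (γ / α - 1) ≤ u n) ∧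
      ∀ N : ℕ, ¬ Summable (fun n : ℕ => u (n + N)) := by
  have hπ := Real.pi_pos
  have hα0 : 0 < α := by linarith
  have habs : |α - 1| = α - 1 := abs_of_nonneg (by linarith)
  have hγα : γ < α := by rw [hγdef, habs]; linarith
  set s : ℝ := γ / α - 1 with hs_def
  have hs0 : s < 0 := by
    have : γ / α < 1 := (div_lt_one hα0).mpr hγα
    simp only [hs_def]; linarith
  have hs1 : -1 ≤ s := by
    have : 0 ≤ γ / α := div_nonneg hγ hα0.le
    simp only [hs_def]; linarith
  set c : ℝ := 1 / α * (Real.pi / (2 * k)) * (3 * Real.pi / k) ^ s with hc_def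
  have hcpos : 0 < c := by
    have : 0 < (3 * Real.pi / k) ^ s := Real.rpow_pos_of_pos (by positivity) s
    positivity
  have key : ∀ n : ℕ, 1 ≤ n → c * (n : ℝ) ^ s ≤ u n := by
    intro n hn
    have hn1 : (1 : ℝ) ≤ n := by exact_mod_cast hn
    have han : 0 < a n := by rw [ha]; positivity
    have hbsub : b n - a n = Real.pi / (2 * k) := by rw [hb]; ring
    have hpi2k : 0 < Real.pi / (2 * k) := by positivity
    have hab : a n ≤ b n := by rw [hb]; linarith
    have hbn : 0 < b n := lt_of_lt_of_le han hab
    have hble : b n ≤ 3 * Real.pi / k * n := by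
      have hstep : Real.pi / 4 + 2 * n * Real.pi + Real.pi / 2 ≤ 3 * Real.pi * n := by
        nlinarith
      calc b n = (1 / k) * (Real.pi / 4 + 2 * n * Real.pi + Real.pi / 2) := by
            rw [hb, ha]; ring
        _ ≤ (1 / k) * (3 * Real.pi * n) :=
            mul_le_mul_of_nonneg_left hstep (by positivity)
        _ = 3 * Real.pi / k * n := by ring
    have hA : 0 < (a n) ^ (1 / α) := Real.rpow_pos_of_pos han _
    have hB : 0 < (b n) ^ (1 / α) := Real.rpow_pos_of_pos hbn _
    have ulower : 1 / α * (b n) ^ s * (Real.pi / (2 * k)) ≤ u n := by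
      rcases eq_or_lt_of_le hγ with hγ0 | hγpos
      · -- γ = 0
        have hγ0' : γ = 0 := hγ0.symm
        have hp : -β + |α - 1| - ε = -1 := by linarith [hγdef, hγ0']
        have hcore : (b n)⁻¹ * (Real.pi / (2 * k)) ≤ Real.log (b n) - Real.log (a n) := by
          have h1 : Real.log (a n / b n) ≤ a n / b n - 1 :=
            Real.log_le_sub_one_of_pos (by positivity)
          rw [Real.log_div han.ne' hbn.ne'] at h1
          have h2 : (b n)⁻¹ * (b n - a n) = 1 - a n / b n := by field_simp
          rw [← hbsub, h2]; linarith
        have huval : u n = 1 / α * (Real.log (b n) - Real.log (a n)) := by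
          rw [hu n, hp]
          simp only [Real.rpow_neg_one]
          rw [integral_inv (Set.notMem_uIcc_of_lt hA hB),
            Real.log_div hB.ne' hA.ne', Real.log_rpow hbn, Real.log_rpow han]
          ring
        rw [huval]
        calc 1 / α * (b n) ^ s * (Real.pi / (2 * k))
            = 1 / α * ((b n)⁻¹ * (Real.pi / (2 * k))) := by
              rw [hs_def, hγ0', zero_div, zero_sub, Real.rpow_neg_one]; ring
          _ ≤ 1 / α * (Real.log (b n) - Real.log (a n)) :=
              mul_le_mul_of_nonneg_left hcore (by positivity)
      · -- 0 < γ
        have hp : -β + |α - 1| - ε = γ - 1 := by linarith [hγdef]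
        have ht0 : 0 < γ / α := div_pos hγpos hα0
        have ht1 : γ / α ≤ 1 := le_of_lt ((div_lt_one hα0).mpr hγα)
        have huval : u n = ((b n) ^ (γ / α) - (a n) ^ (γ / α)) / γ := by
          rw [hu n, hp, integral_rpow (Or.inl (by linarith : (-1:ℝ) < γ - 1))]
          have h : γ - 1 + 1 = γ := by ring
          rw [h, ← Real.rpow_mul hbn.le, ← Real.rpow_mul han.le,
            one_div_mul_eq_div]
        rw [huval, le_div_iff₀ hγpos]
        have hmain := rpow_sub_rpow_lb han hab ht0 ht1
        calc 1 / α * (b n) ^ s * (Real.pi / (2 * k)) * γ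
            = γ / α * (b n) ^ (γ / α - 1) * (b n - a n) := by
              rw [hbsub, hs_def]; ring
          _ ≤ (b n) ^ (γ / α) - (a n) ^ (γ / α) := hmain
    have hbs : (3 * Real.pi / k * n) ^ s ≤ (b n) ^ s :=
      Real.rpow_le_rpow_of_nonpos hbn hble hs0.le
    have hmul : (3 * Real.pi / k * n) ^ s = (3 * Real.pi / k) ^ s * (n : ℝ) ^ s :=
      Real.mul_rpow (by positivity) (by positivity)
    calc c * (n : ℝ) ^ s
        = 1 / α * ((3 * Real.pi / k) ^ s * (n : ℝ) ^ s) * (Real.pi / (2 * k)) := by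
          rw [hc_def]; ring
      _ ≤ 1 / α * (b n) ^ s * (Real.pi / (2 * k)) := by
          rw [← hmul]
          have := mul_le_mul_of_nonneg_left hbs (by positivity : (0:ℝ) ≤ 1 / α)
          exact mul_le_mul_of_nonneg_right this hpi2k.le
      _ ≤ u n := ulower
  refine ⟨⟨c, hcpos, 1, key⟩, ?_⟩
  intro N hsum
  have h2 : Summable (fun n : ℕ => u (n + 1 + N)) :=
    (summable_nat_add_iff (f := fun n => u (n + N)) 1).mpr hsum
  have h3 : Summable (fun n : ℕ => c * ((n + 1 + N : ℕ) : ℝ) ^ s) := by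
    refine Summable.of_nonneg_of_le (fun n => ?_) (fun n => key (n + 1 + N) (by omega)) h2
    have : (0:ℝ) ≤ ((n + 1 + N : ℕ) : ℝ) ^ s := Real.rpow_nonneg (by positivity) s
    positivity
  have h4 : Summable (fun n : ℕ => ((n + 1 + N : ℕ) : ℝ) ^ s) :=
    (summable_mul_left_iff hcpos.ne').mp h3
  have h5 : Summable (fun n : ℕ => ((n : ℕ) : ℝ) ^ s) := by
    refine (summable_nat_add_iff (f := fun n : ℕ => ((n : ℕ) : ℝ) ^ s) (1 + N)).mp ?_
    simpa [add_assoc] using h4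
  have := Real.summable_nat_rpow.mp h5
  linarith
end
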